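/- Let a, L be real numbers, b > a, and f : [a,b] → ℝ. Suppose that for all s in [a,b], the upper derivative limsup_{t→s} (f(t)-f(s))/(t-s) is at most L. Then the function s ↦ limsup_{t→s}(f(t)-f(s))/(t-s) is integrable on [a,b], and f(b) - f(a) ≤ ∫_a^b limsup_{t→s}(f(t)-f(s))/(t-s) ds. -/

import Mathlib

open Filter Set MeasureTheory

/-- The canonical map `EReal → ℝ≥0∞`, sending `⊤` to `⊤` and everything
nonpositive to `0`. -/
noncomputable def erealToENNReal (x : EReal) : ENNReal :=
  if x = ⊤ then ⊤ else ENNReal.ofReal x.toReal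

/-- The upper derivative of `f` at `s` relative to `[a,b]`, as an extended real. -/
noncomputable def upperDeriv (a b : ℝ) (f : ℝ → ℝ) (s : ℝ) : EReal :=
  Filter.limsup (fun t => ((f t - f s) / (t - s) : EReal))
    (nhdsWithin s (Set.Icc a b \ {s}))

section Aux
variable {a b L : ℝ} {f : ℝ → ℝ}

lemma upperDeriv_eq (a b : ℝ) (f : ℝ → ℝ) (s : ℝ) :
    upperDeriv a b f s = Filter.limsup (fun t => (((f t - f s) / (t - s) : ℝ) : EReal))
      (nhdsWithin s (Set.Icc a b \ {s})) := by
  simp only [upperDeriv, EReal.coe_div, EReal.coe_sub]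

lemma slope_lt_eventually {a b L : ℝ} {f : ℝ → ℝ} {s : ℝ}
    (hub : upperDeriv a b f s ≤ (L : EReal)) {c : ℝ} (hc : L < c) :
    ∃ δ > 0, ∀ t ∈ Metric.ball s δ ∩ (Set.Icc a b \ {s}), (f t - f s) / (t - s) < c := by
  rw [upperDeriv_eq] at hub
  have h : Filter.limsup (fun t => (((f t - f s) / (t - s) : ℝ) : EReal))
      (nhdsWithin s (Set.Icc a b \ {s})) < (c : EReal) :=
    lt_of_le_of_lt hub (by exact_mod_cast hc)
  have hev := eventually_lt_of_limsup_lt h ⟨⊤, Eventually.of_forall (fun _ => le_top)⟩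
  rw [(nhdsWithin_hasBasis Metric.nhds_basis_ball _).eventually_iff] at hev
  obtain ⟨δ, hδ, h⟩ := hev
  exact ⟨δ, hδ, fun t ht => by exact_mod_cast h ht⟩

lemma growth_le {a b L : ℝ} {f : ℝ → ℝ}
    (hL : ∀ s ∈ Set.Icc a b, upperDeriv a b f s ≤ (L : EReal))
    {x y : ℝ} (hx : x ∈ Set.Icc a b) (hy : y ∈ Set.Icc a b) (hxy : x ≤ y) :
    f y - f x ≤ L * (y - x) := by
  -- first prove with L+ε
  have key : ∀ ε > 0, f y - f x ≤ (L + ε) * (y - x) := by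
    intro ε hε
    set S : Set ℝ := {t | t ∈ Set.Icc x y ∧ f t - f x ≤ (L + ε) * (t - x)} with hS
    have hxS : x ∈ S := ⟨⟨le_refl x, hxy⟩, by simp⟩
    have hSne : S.Nonempty := ⟨x, hxS⟩
    have hSbdd : BddAbove S := ⟨y, fun t ht => ht.1.2⟩
    set c := sSup S with hc
    have hcx : x ≤ c := le_csSup hSbdd hxS
    have hcy : c ≤ y := csSup_le hSne (fun t ht => ht.1.2)
    have hcab : c ∈ Set.Icc a b := ⟨le_trans hx.1 hcx, le_trans hcy hy.2⟩
    obtain ⟨δ, hδ, hball⟩ := slope_lt_eventually (hL c hcab) (lt_add_of_pos_right L hε)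
    -- c ∈ S
    have hcS : c ∈ S := by
      rcases eq_or_lt_of_le hcx with h | h
      · rwa [← h]
      · -- pick t ∈ S with c - min δ (c-x) < t
        obtain ⟨t, htS, htc⟩ := exists_lt_of_lt_csSup hSne
          (show c - min δ (c - x) < c by
            have : 0 < min δ (c - x) := lt_min hδ (by linarith)
            linarith)
        have htc' : t ≤ c := le_csSup hSbdd htS
        rcases eq_or_lt_of_le htc' with h2 | h2
        · rwa [← h2]
        · have htab : t ∈ Set.Icc a b :=
            ⟨le_trans hx.1 htS.1.1, le_trans (le_trans htS.1.2 hy.2) (le_refl b)⟩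
          have hmem : t ∈ Metric.ball c δ ∩ (Set.Icc a b \ {c}) := by
            constructor
            · rw [Metric.mem_ball, Real.dist_eq, abs_of_neg (by linarith : t - c < 0)]
              have := min_le_left δ (c - x); linarith
            · exact ⟨htab, fun h3 => absurd h3 (by simp; linarith)⟩
          have hs := hball t hmem
          rw [div_lt_iff_of_neg (by linarith : t - c < 0)] at hs
          refine ⟨⟨hcx, hcy⟩, ?_⟩
          have := htS.2
          nlinarith
    -- c = y
    have hcy' : c = y := by
      by_contra hne
      have hlt : c < y := lt_of_le_of_ne hcy hne
      set t := min (c + δ / 2) y with ht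
      have htc : c < t := lt_min (by linarith) hlt
      have hty : t ≤ y := min_le_right _ _
      have htab : t ∈ Set.Icc a b := ⟨le_trans hcab.1 (le_of_lt htc), le_trans hty hy.2⟩
      have hmem : t ∈ Metric.ball c δ ∩ (Set.Icc a b \ {c}) := by
        constructor
        · rw [Metric.mem_ball, Real.dist_eq, abs_of_pos (by linarith : 0 < t - c)]
          have := min_le_left (c + δ / 2) y; linarith
        · exact ⟨htab, fun h3 => absurd h3 (by simp; linarith)⟩
      have hs := hball t hmem
      rw [div_lt_iff₀ (by linarith : 0 < t - c)] at hs
      have htS : t ∈ S := by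
        refine ⟨⟨le_trans hcx (le_of_lt htc), hty⟩, ?_⟩
        have := hcS.2
        nlinarith
      exact absurd (le_csSup hSbdd htS) (by push_neg; exact htc)
    have := hcS.2
    rw [hcy'] at this
    exact this
  rcases eq_or_lt_of_le hxy with h | h
  · rw [← h]; simp
  · by_contra hcon
    push_neg at hcon
    set ε := (f y - f x - L * (y - x)) / (2 * (y - x)) with hε
    have hε0 : 0 < ε := div_pos (by linarith) (by linarith)
    have := key ε hε0
    rw [add_mul] at this
    have hεy : ε * (y - x) < f y - f x - L * (y - x) := by
      rw [hε, div_mul_eq_mul_div, mul_comm 2 (y-x), ← div_div,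
        mul_div_assoc]
      have h2 : (y - x) / (y - x) = 1 := div_self (by linarith)
      rw [h2, mul_one]
      linarith
    linarith


lemma neBot_deriv_filter {s : ℝ} (hab : a < b) (hs : s ∈ Set.Icc a b) :
    (nhdsWithin s (Set.Icc a b \ {s})).NeBot := by
  rw [← mem_closure_iff_nhdsWithin_neBot]
  rcases lt_or_ge s b with h | h
  · have h1 : Set.Ioo s b ⊆ Set.Icc a b \ {s} := fun t ht =>
      ⟨⟨le_trans hs.1 (le_of_lt ht.1), le_of_lt ht.2⟩, ne_of_gt ht.1⟩
    exact closure_mono h1 (by rw [closure_Ioo (ne_of_lt h)]; exact ⟨le_refl s, le_of_lt h⟩)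
  · have hsb : s = b := le_antisymm hs.2 h
    have h1 : Set.Ioo a s ⊆ Set.Icc a b \ {s} := fun t ht =>
      ⟨⟨le_of_lt ht.1, le_trans (le_of_lt ht.2) hs.2⟩, ne_of_lt ht.2⟩
    have has : a < s := hsb ▸ hab
    exact closure_mono h1 (by rw [closure_Ioo (ne_of_lt has)]; exact ⟨le_of_lt has, le_refl s⟩)

lemma upperDeriv_of_hasDerivAt {s d : ℝ} (hab : a < b) (hs : s ∈ Set.Icc a b)
    (hd : HasDerivAt (fun x => L * (max a (min b x)) - f (max a (min b x))) d s) :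
    upperDeriv a b f s = ((L - d : ℝ) : EReal) := by
  haveI := neBot_deriv_filter hab hs
  set G := fun x => L * (max a (min b x)) - f (max a (min b x)) with hG
  rw [hasDerivAt_iff_tendsto_slope] at hd
  have hle : nhdsWithin s (Set.Icc a b \ {s}) ≤ nhdsWithin s {s}ᶜ :=
    nhdsWithin_mono _ (fun t ht => ht.2)
  have h1 : Tendsto (slope G s) (nhdsWithin s (Set.Icc a b \ {s})) (nhds d) :=
    hd.mono_left hle
  have h2 : Tendsto (fun t => (f t - f s) / (t - s))
      (nhdsWithin s (Set.Icc a b \ {s})) (nhds (L - d)) := by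
    have h3 : Tendsto (fun t => L - slope G s t)
        (nhdsWithin s (Set.Icc a b \ {s})) (nhds (L - d)) :=
      (tendsto_const_nhds.sub h1)
    refine h3.congr' ?_
    filter_upwards [self_mem_nhdsWithin] with t ht
    have hts : t ∈ Set.Icc a b := ht.1
    have htne : t ≠ s := ht.2
    have hGt : G t = L * t - f t := by
      simp only [hG]; rw [min_eq_right hts.2, max_eq_right hts.1]
    have hGs : G s = L * s - f s := by
      simp only [hG]; rw [min_eq_right hs.2, max_eq_right hs.1]
    have h4 : t - s ≠ 0 := sub_ne_zero.mpr htne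
    rw [slope_def_field, hGt, hGs]
    field_simp
    ring
  rw [upperDeriv_eq]
  exact Tendsto.limsup_eq (((continuous_coe_real_ereal).tendsto _).comp h2)


lemma slope_f_eq {L s t : ℝ} {f : ℝ → ℝ} (h : t ≠ s) :
    (f t - f s) / (t - s) = L - ((L * t - f t) - (L * s - f s)) / (t - s) := by
  have h4 : t - s ≠ 0 := sub_ne_zero.mpr h
  field_simp
  ring

lemma exists_rat_slope (hmono : MonotoneOn (fun x => L * x - f x) (Set.Icc a b))
    {s t r ε : ℝ} (hs : s ∈ Set.Icc a b) (ht : t ∈ Set.Icc a b) (hts : t ≠ s)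
    (hr : |t - s| < r) (hε : 0 < ε) :
    ∃ q : ℚ, (q : ℝ) ∈ Metric.ball s r ∩ (Set.Icc a b \ {s}) ∧
      (f t - f s) / (t - s) - ε < (f (q : ℝ) - f s) / ((q : ℝ) - s) := by
  set g : ℝ → ℝ := fun x => L * x - f x with hg
  rcases lt_or_gt_of_ne hts with hlt | hgt
  · -- t < s : pick q ∈ (t, s - m)
    set N := g s - g t with hN
    have hN0 : 0 ≤ N := sub_nonneg.mpr (hmono ht hs (le_of_lt hlt))
    have hd : 0 < s - t := by linarith
    set sl := N / (s - t) with hsl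
    have hsl0 : 0 ≤ sl := div_nonneg hN0 (le_of_lt hd)
    set m := N / (sl + ε) with hm
    have hm0 : 0 ≤ m := div_nonneg hN0 (by linarith)
    have hmlt : m < s - t := by
      rcases eq_or_lt_of_le hN0 with h0 | h0
      · rw [hm, ← h0]; simpa using hd
      · rw [hm, div_lt_iff₀ (by linarith : (0:ℝ) < sl + ε)]
        have : N = sl * (s - t) := by rw [hsl]; field_simp
        nlinarith
    obtain ⟨q, hq1, hq2⟩ := exists_rat_btwn (show t < s - m by linarith)
    have hqs : (q:ℝ) < s := by linarith
    have hqab : (q:ℝ) ∈ Set.Icc a b := ⟨le_trans ht.1 (le_of_lt hq1), le_trans (le_of_lt hqs) hs.2⟩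
    have hgq : g t ≤ g q := hmono ht hqab (le_of_lt hq1)
    have hslope : (g s - g q) / (s - q) < sl + ε := by
      have h1 : 0 < s - (q:ℝ) := by linarith
      rw [div_lt_iff₀ h1]
      have h2 : m * (sl + ε) = N := by
        rw [hm]; field_simp
      have h3 : g s - g q ≤ N := by rw [hN]; linarith
      nlinarith
    refine ⟨q, ⟨?_, hqab, ?_⟩, ?_⟩
    · rw [Metric.mem_ball, Real.dist_eq, abs_of_neg (by linarith : (q:ℝ) - s < 0)]
      rw [abs_of_neg (by linarith : t - s < 0)] at hr
      linarith
    · simp only [mem_singleton_iff]; intro h; rw [h] at hqs; linarith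
    · have e1 : (f t - f s) / (t - s) = L - sl := by
        rw [slope_f_eq hts, hsl, hN]
        have : (g t - g s) / (t - s) = (g s - g t) / (s - t) := by
          rw [div_eq_div_iff (by linarith) (by linarith)]; ring
        rw [hg] at this ⊢
        rw [this]
      have e2 : (f (q:ℝ) - f s) / ((q:ℝ) - s) = L - (g s - g q) / (s - q) := by
        rw [slope_f_eq (show (q:ℝ) ≠ s by intro h; rw [h] at hqs; linarith)]
        have : (g (q:ℝ) - g s) / ((q:ℝ) - s) = (g s - g q) / (s - q) := by
          rw [div_eq_div_iff (by linarith) (by linarith)]; ring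
        rw [hg] at this ⊢
        rw [this]
      rw [e1, e2]; linarith
  · -- s < t : pick q ∈ (s + m, t)
    set N := g t - g s with hN
    have hN0 : 0 ≤ N := sub_nonneg.mpr (hmono hs ht (le_of_lt hgt))
    have hd : 0 < t - s := by linarith
    set sl := N / (t - s) with hsl
    have hsl0 : 0 ≤ sl := div_nonneg hN0 (le_of_lt hd)
    set m := N / (sl + ε) with hm
    have hm0 : 0 ≤ m := div_nonneg hN0 (by linarith)
    have hmlt : m < t - s := by
      rcases eq_or_lt_of_le hN0 with h0 | h0
      · rw [hm, ← h0]; simpa using hd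
      · rw [hm, div_lt_iff₀ (by linarith : (0:ℝ) < sl + ε)]
        have : N = sl * (t - s) := by rw [hsl]; field_simp
        nlinarith
    obtain ⟨q, hq1, hq2⟩ := exists_rat_btwn (show s + m < t by linarith)
    have hqs : s < (q:ℝ) := by linarith
    have hqab : (q:ℝ) ∈ Set.Icc a b := ⟨le_trans hs.1 (le_of_lt hqs), le_trans (le_of_lt hq2) ht.2⟩
    have hgq : g q ≤ g t := hmono hqab ht (le_of_lt hq2)
    have hslope : (g q - g s) / ((q:ℝ) - s) < sl + ε := by
      have h1 : 0 < (q:ℝ) - s := by linarith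
      rw [div_lt_iff₀ h1]
      have h2 : m * (sl + ε) = N := by rw [hm]; field_simp
      have h3 : g q - g s ≤ N := by rw [hN]; linarith
      nlinarith
    refine ⟨q, ⟨?_, hqab, ?_⟩, ?_⟩
    · rw [Metric.mem_ball, Real.dist_eq, abs_of_pos (by linarith : (0:ℝ) < (q:ℝ) - s)]
      rw [abs_of_pos (by linarith : (0:ℝ) < t - s)] at hr
      linarith
    · simp only [mem_singleton_iff]; intro h; rw [h] at hqs; linarith
    · have e1 : (f t - f s) / (t - s) = L - sl := by
        rw [slope_f_eq hts, hsl, hN, hg]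
      have e2 : (f (q:ℝ) - f s) / ((q:ℝ) - s) = L - (g q - g s) / ((q:ℝ) - s) := by
        rw [slope_f_eq (show (q:ℝ) ≠ s by intro h; rw [h] at hqs; linarith), hg]
      rw [e1, e2]; linarith


lemma upperDeriv_formula (hmono : MonotoneOn (fun x => L * x - f x) (Set.Icc a b))
    {s : ℝ} (hs : s ∈ Set.Icc a b) :
    upperDeriv a b f s = ⨅ n : ℕ, ⨆ q : ℚ,
      ⨆ (_ : (q : ℝ) ∈ Metric.ball s (1 / (n + 1)) ∩ (Set.Icc a b \ {s})),
        (((f (q : ℝ) - f s) / ((q : ℝ) - s) : ℝ) : EReal) := by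
  rw [upperDeriv_eq,
    (nhdsWithin_hasBasis Metric.nhds_basis_ball_inv_nat_succ _).limsup_eq_iInf_iSup]
  simp only [iInf_true]
  refine iInf_congr fun n => ?_
  apply le_antisymm
  · refine iSup₂_le fun t ht => ?_
    refine le_of_forall_lt fun c hc => ?_
    have htball : |t - s| < 1 / (n + 1) := by
      have := ht.1; rwa [Metric.mem_ball, Real.dist_eq] at this
    have htab : t ∈ Set.Icc a b := ht.2.1
    have htne : t ≠ s := ht.2.2
    induction c with
    | bot =>
      obtain ⟨q, hq, _⟩ := exists_rat_slope hmono hs htab htne htball one_pos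
      refine lt_of_lt_of_le (EReal.bot_lt_coe ((f (q:ℝ) - f s) / ((q:ℝ) - s))) ?_
      exact le_iSup₂ (f := fun (q : ℚ) (_ : (q : ℝ) ∈ Metric.ball s (1 / (↑n + 1)) ∩ (Set.Icc a b \ {s})) =>
        (((f (q : ℝ) - f s) / ((q : ℝ) - s) : ℝ) : EReal)) q hq
    | coe c =>
      have hc' : c < (f t - f s) / (t - s) := by exact_mod_cast hc
      obtain ⟨q, hq, hq2⟩ := exists_rat_slope hmono hs htab htne htball
        (show (0:ℝ) < (f t - f s) / (t - s) - c by linarith)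
      have : c < (f (q:ℝ) - f s) / ((q:ℝ) - s) := by linarith
      refine lt_of_lt_of_le
        (show (c : EReal) < (((f (q : ℝ) - f s) / ((q : ℝ) - s) : ℝ) : EReal) by exact_mod_cast this) ?_
      exact le_iSup₂ (f := fun (q : ℚ) (_ : (q : ℝ) ∈ Metric.ball s (1 / (↑n + 1)) ∩ (Set.Icc a b \ {s})) =>
        (((f (q : ℝ) - f s) / ((q : ℝ) - s) : ℝ) : EReal)) q hq
    | top => exact absurd hc (not_top_lt)
  · refine iSup_le fun q => ?_
    refine iSup_le fun h => ?_
    exact le_iSup₂ (f := fun t (_ : t ∈ Metric.ball s (1 / (↑n + 1)) ∩ (Set.Icc a b \ {s})) =>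
      (((f t - f s) / (t - s) : ℝ) : EReal)) (q : ℝ) h


lemma measurable_erealToENNReal : Measurable erealToENNReal := by
  unfold erealToENNReal
  refine Measurable.ite ?_ measurable_const
    (ENNReal.measurable_ofReal.comp measurable_ereal_toReal)
  exact measurableSet_eq

lemma measurable_L_sub : ∀ L : ℝ, Measurable (fun x : EReal => (L : EReal) - x) := by
  intro L
  have : Antitone (fun x : EReal => (L : EReal) - x) :=
    fun x y hxy => EReal.sub_le_sub (le_refl _) hxy
  exact this.measurable


lemma monotone_G (hab : a ≤ b) (hmono : MonotoneOn (fun x => L * x - f x) (Set.Icc a b)) :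
    Monotone (fun x => L * (max a (min b x)) - f (max a (min b x))) := by
  intro x y hxy
  have hπ : ∀ z : ℝ, max a (min b z) ∈ Set.Icc a b := fun z =>
    ⟨le_max_left _ _, max_le hab (min_le_left _ _)⟩
  exact hmono (hπ x) (hπ y) (max_le_max (le_refl a) (min_le_min (le_refl b) hxy))

lemma measurable_main (hab : a < b)
    (hmono : MonotoneOn (fun x => L * x - f x) (Set.Icc a b)) :
    Measurable (fun s => erealToENNReal ((L : EReal) - upperDeriv a b f s)) := by
  classical
  set G : ℝ → ℝ := fun x => L * (max a (min b x)) - f (max a (min b x)) with hGdef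
  have hGmono : Monotone G := monotone_G (le_of_lt hab) hmono
  have hGmeas : Measurable G := hGmono.measurable
  set Φ : ℝ → EReal := fun s => ⨅ n : ℕ, ⨆ q : ℚ,
    ⨆ (_ : (q : ℝ) ∈ Metric.ball s (1 / (n + 1)) ∩ (Set.Icc a b \ {s})),
      (((f (q : ℝ) - (L * s - G s)) / ((q : ℝ) - s) : ℝ) : EReal) with hΦdef
  have hΦmeas : Measurable Φ := by
    refine Measurable.iInf fun n => Measurable.iSup fun q => ?_
    have heq : (fun s => ⨆ (_ : (q : ℝ) ∈ Metric.ball s (1 / (n + 1)) ∩ (Set.Icc a b \ {s})),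
        (((f (q : ℝ) - (L * s - G s)) / ((q : ℝ) - s) : ℝ) : EReal)) =
        (fun s => if (q : ℝ) ∈ Metric.ball s (1 / (n + 1)) ∩ (Set.Icc a b \ {s})
          then (((f (q : ℝ) - (L * s - G s)) / ((q : ℝ) - s) : ℝ) : EReal) else ⊥) := by
      funext s
      by_cases h : (q : ℝ) ∈ Metric.ball s (1 / (n + 1)) ∩ (Set.Icc a b \ {s})
      · rw [if_pos h, iSup_pos h]
      · rw [if_neg h, iSup_neg h]
    rw [heq]
    have hvmeas : Measurable (fun s : ℝ =>
        (((f (q : ℝ) - (L * s - G s)) / ((q : ℝ) - s) : ℝ) : EReal)) :=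
      measurable_coe_real_ereal.comp
        ((measurable_const.sub ((measurable_const.mul measurable_id).sub hGmeas)).div
          (measurable_const.sub measurable_id))
    refine Measurable.ite ?_ hvmeas measurable_const
    have hset : {s : ℝ | (q : ℝ) ∈ Metric.ball s (1 / (n + 1)) ∩ (Set.Icc a b \ {s})} =
        if (q : ℝ) ∈ Set.Icc a b
          then Metric.ball (q : ℝ) (1 / (n + 1)) ∩ {(q : ℝ)}ᶜ else ∅ := by
      ext s
      by_cases hq : (q : ℝ) ∈ Set.Icc a b
      · simp only [if_pos hq, mem_setOf_eq, mem_inter_iff, Metric.mem_ball, mem_diff,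
          mem_singleton_iff, mem_compl_iff, hq, true_and]
        constructor
        · rintro ⟨h1, h2⟩; exact ⟨by rwa [dist_comm] at h1, fun h => h2 h.symm⟩
        · rintro ⟨h1, h2⟩; exact ⟨by rwa [dist_comm], fun h => h2 h.symm⟩
      · simp [hq]
    rw [hset]
    split
    · exact (Metric.isOpen_ball.measurableSet).inter (measurableSet_singleton _).compl
    · exact MeasurableSet.empty
  have htarget : (fun s => erealToENNReal ((L : EReal) - upperDeriv a b f s)) =
      (fun s => if s ∈ Set.Icc a b then erealToENNReal ((L : EReal) - Φ s) else ⊤) := by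
    funext s
    by_cases hs : s ∈ Set.Icc a b
    · rw [if_pos hs]
      congr 2
      have hfs : L * s - G s = f s := by
        rw [hGdef]; simp only [min_eq_right hs.2, max_eq_right hs.1]; ring
      rw [upperDeriv_formula hmono hs, hΦdef]
      simp only [hfs]
    · rw [if_neg hs]
      have hbot : nhdsWithin s (Set.Icc a b \ {s}) = ⊥ := by
        rw [← not_neBot]
        intro h
        rw [← mem_closure_iff_nhdsWithin_neBot] at h
        exact hs (closure_minimal diff_subset isClosed_Icc h)
      rw [upperDeriv, hbot, Filter.limsup_bot, EReal.coe_sub_bot]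
      rw [erealToENNReal, if_pos rfl]
  rw [htarget]
  exact Measurable.ite measurableSet_Icc
    ((measurable_erealToENNReal.comp (measurable_L_sub L)).comp hΦmeas) measurable_const


lemma integral_part (hab : a < b)
    (hL : ∀ s ∈ Set.Icc a b, upperDeriv a b f s ≤ (L : EReal)) :
    ((f b - f a : ℝ) : EReal) ≤
      ((L * (b - a) : ℝ) : EReal) -
        ((∫⁻ s in Set.Icc a b,
            erealToENNReal ((L : EReal) - upperDeriv a b f s)) : ENNReal) := by
  have hmono : MonotoneOn (fun x => L * x - f x) (Set.Icc a b) := by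
    intro x hx y hy hxy
    have := growth_le hL hx hy hxy
    simp only
    linarith
  set G : ℝ → ℝ := fun x => L * (max a (min b x)) - f (max a (min b x)) with hGdef
  have hGmono : Monotone G := monotone_G (le_of_lt hab) hmono
  set μ := hGmono.stieltjesFunction.measure with hμ
  -- the integrand equals rnDeriv a.e. on Ioo a b
  have h_ae : ∀ᵐ s, s ∈ Set.Ioo a b →
      erealToENNReal ((L : EReal) - upperDeriv a b f s) = μ.rnDeriv volume s := by
    filter_upwards [hGmono.ae_hasDerivAt, Measure.rnDeriv_lt_top μ volume] with s hds hfin hsIoo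
    set d := (μ.rnDeriv volume s).toReal with hd
    have h1 : upperDeriv a b f s = ((L - d : ℝ) : EReal) :=
      upperDeriv_of_hasDerivAt hab (Set.mem_Icc_of_Ioo hsIoo) hds
    rw [h1, ← EReal.coe_sub]
    have h2 : (L - (L - d) : ℝ) = d := by ring
    rw [h2, erealToENNReal, if_neg (by simp), EReal.toReal_coe, hd,
      ENNReal.ofReal_toReal hfin.ne]
  -- integral bound
  have hIle : (∫⁻ s in Set.Icc a b, erealToENNReal ((L : EReal) - upperDeriv a b f s))
      ≤ ENNReal.ofReal (L * (b - a) - (f b - f a)) := by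
    have e1 : (∫⁻ s in Set.Icc a b, erealToENNReal ((L : EReal) - upperDeriv a b f s))
        = ∫⁻ s in Set.Ioo a b, erealToENNReal ((L : EReal) - upperDeriv a b f s) := by
      rw [Measure.restrict_congr_set (Ioo_ae_eq_Icc)]
    have e2 : (∫⁻ s in Set.Ioo a b, erealToENNReal ((L : EReal) - upperDeriv a b f s))
        = ∫⁻ s in Set.Ioo a b, μ.rnDeriv volume s := by
      exact lintegral_congr_ae ((ae_restrict_iff' measurableSet_Ioo).mpr h_ae)
    rw [e1, e2]
    refine le_trans (Measure.setLIntegral_rnDeriv_le _) ?_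
    -- μ (Ioo a b) ≤ μ (Icc a b) = ofReal (G b - G a)
    refine le_trans (measure_mono Set.Ioo_subset_Icc_self) ?_
    rw [hμ, StieltjesFunction.measure_Icc]
    have hπb : a ⊔ b ⊓ b = b := by rw [min_self]; exact max_eq_right (le_of_lt hab)
    have hπa : a ⊔ b ⊓ a = a := by rw [min_eq_right (le_of_lt hab)]; exact max_self a
    have hFb : hGmono.stieltjesFunction b = G b := by
      rw [hGmono.stieltjesFunction_eq]
      refine rightLim_eq_of_tendsto
        ?_
      refine Tendsto.congr' ?_ tendsto_const_nhds
      filter_upwards [self_mem_nhdsWithin] with x (hx : b < x)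
      simp only [hGdef, min_eq_left (le_of_lt hx), max_eq_right (le_of_lt hab), hπb]
    have hFa : Function.leftLim (hGmono.stieltjesFunction : ℝ → ℝ) a = G a := by
      refine leftLim_eq_of_tendsto
        ?_
      refine Tendsto.congr' ?_ tendsto_const_nhds
      filter_upwards [self_mem_nhdsWithin] with x (hx : x < a)
      rw [hGmono.stieltjesFunction_eq]
      refine (rightLim_eq_of_tendsto
        ?_).symm
      refine Tendsto.congr' ?_ tendsto_const_nhds
      have hIoo : Set.Ioo x a ∈ nhdsWithin x (Set.Ioi x) :=
        Ioo_mem_nhdsGT_of_mem ⟨le_refl x, hx⟩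
      filter_upwards [hIoo] with y hy
      simp only [hGdef, min_eq_right (le_trans (le_of_lt hy.2) (le_of_lt hab)),
        max_eq_left (le_of_lt hy.2), hπa]
    rw [hFb, hFa]
    have : G b - G a = L * (b - a) - (f b - f a) := by
      simp only [hGdef, hπa, hπb]
      ring
    rw [this]
  -- conclude
  set I := (∫⁻ s in Set.Icc a b, erealToENNReal ((L : EReal) - upperDeriv a b f s)) with hI
  set r := L * (b - a) - (f b - f a) with hr
  have hr0 : 0 ≤ r := by
    have := growth_le hL (Set.left_mem_Icc.mpr (le_of_lt hab))
      (Set.right_mem_Icc.mpr (le_of_lt hab)) (le_of_lt hab)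
    rw [hr]; linarith
  have hcoe : (I : EReal) ≤ (r : EReal) := by
    refine le_trans (EReal.coe_ennreal_le_coe_ennreal_iff.mpr hIle) ?_
    rw [EReal.coe_ennreal_ofReal, max_eq_left hr0]
  have := EReal.sub_le_sub (le_refl ((L * (b - a) : ℝ) : EReal)) hcoe
  refine le_trans ?_ this
  rw [← EReal.coe_sub]
  apply EReal.coe_le_coe_iff.mpr
  rw [hr]; linarith

end Aux

/-- Lemma A.2 (Lahiri): if the upper derivative of `f` is bounded above by `L`
on `[a,b]`, then it is integrable (its well-defined integral being
`L (b-a)` minus the `ℝ≥0∞`-valued integral of the nonnegative difference) and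
`f b - f a ≤ ∫_a^b (upper derivative of f at s) ds`. -/
theorem growth_bound_by_integral_of_upper_derivative
    (a b L : ℝ) (hab : a < b) (f : ℝ → ℝ)
    (hL : ∀ s ∈ Set.Icc a b, upperDeriv a b f s ≤ (L : EReal)) :
    Measurable (fun s => erealToENNReal ((L : EReal) - upperDeriv a b f s)) ∧
    ((f b - f a : ℝ) : EReal) ≤
      ((L * (b - a) : ℝ) : EReal) -
        ((∫⁻ s in Set.Icc a b,
            erealToENNReal ((L : EReal) - upperDeriv a b f s)) : ENNReal) := by
  have hmono : MonotoneOn (fun x => L * x - f x) (Set.Icc a b) := by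
    intro x hx y hy hxy
    have := growth_le hL hx hy hxy
    simp only
    linarith
  exact ⟨measurable_main hab hmono, integral_part hab hL⟩
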